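/- arXiv:1812.06166 — 6 statements merged into one kernel-verified Lean document; each statement's English description precedes it below -/
import Mathlib

section
/- Every n-dimensional Archimedean copula is Schur-concave: if C(u₁,…,uₙ) = φ⁻¹(∑ᵢ φ(uᵢ)) where φ : [0,1] → [0,∞] is strictly decreasing with φ(1) = 0, then u ≼_m v implies C(u) ≥ C(v). -/
open Finset ENNReal

/-- Sum of the `j` smallest entries of `x`. -/
noncomputable def sumSmallest {n : ℕ} (j : ℕ) (x : Fin n → ℝ) : ℝ :=
  sInf ((fun s : Finset (Fin n) => ∑ i ∈ s, x i) '' {s : Finset (Fin n) | s.card = j})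

/-- `x` is majorized by `y`. -/
def Majorized {n : ℕ} (x y : Fin n → ℝ) : Prop :=
  (∑ i, x i = ∑ i, y i) ∧
    ∀ j : ℕ, 1 ≤ j → j ≤ n - 1 → sumSmallest j y ≤ sumSmallest j x


lemma ennreal_div_div (X : ℝ≥0∞) (N : ℕ) : X / 2 ^ N / 2 = X / 2 ^ (N + 1) := by
  rw [div_eq_mul_inv, div_eq_mul_inv, div_eq_mul_inv, mul_assoc, ← ENNReal.mul_inv
    (by left; positivity) (by left; exact (pow_ne_top (by norm_num))), ← pow_succ]

lemma dyadic_convex (φinv : ℝ≥0∞ → ℝ)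
    (hmid : ∀ a b : ℝ≥0∞, φinv ((a + b) / 2) ≤ (φinv a + φinv b) / 2) :
    ∀ N k m : ℕ, k + m = 2 ^ N → ∀ a b : ℝ≥0∞,
      φinv (((k : ℝ≥0∞) * a + (m : ℝ≥0∞) * b) / 2 ^ N) ≤
        ((k : ℝ) * φinv a + (m : ℝ) * φinv b) / 2 ^ N := by
  intro N
  induction N with
  | zero =>
    intro k m hkm a b
    have hk1 : k ≤ 1 := by omega
    interval_cases k <;> simp_all
  | succ N ih =>
    intro k m hkm a b
    have hk2 : k ≤ 2 ^ (N + 1) := by omega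
    set k₁ := min k (2 ^ N) with hk₁
    set k₂ := k - k₁ with hk₂
    have hk₁le : k₁ ≤ 2 ^ N := min_le_right _ _
    have hk₂le : k₂ ≤ 2 ^ N := by
      have := pow_succ 2 N
      omega
    have hkk : k₁ + k₂ = k := by omega
    set m₁ := 2 ^ N - k₁ with hm₁
    set m₂ := 2 ^ N - k₂ with hm₂
    have hmm : m₁ + m₂ = m := by
      have := pow_succ 2 N
      omega
    have h₁ : k₁ + m₁ = 2 ^ N := by omega
    have h₂ : k₂ + m₂ = 2 ^ N := by omega
    have harg : ((k : ℝ≥0∞) * a + (m : ℝ≥0∞) * b) / 2 ^ (N + 1) =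
        ((((k₁ : ℝ≥0∞) * a + (m₁ : ℝ≥0∞) * b) / 2 ^ N) +
          (((k₂ : ℝ≥0∞) * a + (m₂ : ℝ≥0∞) * b) / 2 ^ N)) / 2 := by
      rw [ENNReal.div_add_div_same, ennreal_div_div]
      congr 1
      rw [← hkk, ← hmm]
      push_cast
      ring
    rw [harg]
    calc φinv _ ≤ (φinv (((k₁ : ℝ≥0∞) * a + (m₁ : ℝ≥0∞) * b) / 2 ^ N) +
            φinv (((k₂ : ℝ≥0∞) * a + (m₂ : ℝ≥0∞) * b) / 2 ^ N)) / 2 := hmid _ _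
      _ ≤ ((((k₁ : ℝ) * φinv a + (m₁ : ℝ) * φinv b) / 2 ^ N) +
            (((k₂ : ℝ) * φinv a + (m₂ : ℝ) * φinv b) / 2 ^ N)) / 2 := by
          gcongr <;> [exact ih _ _ h₁ a b; exact ih _ _ h₂ a b]
      _ = ((k : ℝ) * φinv a + (m : ℝ) * φinv b) / 2 ^ (N + 1) := by
          rw [← hkk, ← hmm]
          push_cast
          ring
lemma f_dyadic (φ : ℝ → ℝ≥0∞) (φinv : ℝ≥0∞ → ℝ)
    (hφanti : StrictAntiOn φ (Set.Icc 0 1))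
    (hφ0 : φ 0 = ⊤)
    (hinv : ∀ t ∈ Set.Icc (0:ℝ) 1, φinv (φ t) = t)
    (hinv_anti : Antitone φinv)
    (hmid : ∀ a b : ℝ≥0∞, φinv ((a + b) / 2) ≤ (φinv a + φinv b) / 2) :
    ∀ N k m : ℕ, k + m = 2 ^ N → ∀ w y : ℝ, w ∈ Set.Ioc (0:ℝ) 1 → y ∈ Set.Ioc (0:ℝ) 1 →
      (φ (((k : ℝ) * w + (m : ℝ) * y) / 2 ^ N)).toReal ≤
        ((k : ℝ) * (φ w).toReal + (m : ℝ) * (φ y).toReal) / 2 ^ N := by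
  have h0mem : (0:ℝ) ∈ Set.Icc (0:ℝ) 1 := ⟨le_refl 0, zero_le_one⟩
  have hfin : ∀ z : ℝ, z ∈ Set.Ioc (0:ℝ) 1 → φ z ≠ ⊤ := by
    intro z hz
    have := hφanti h0mem ⟨hz.1.le, hz.2⟩ hz.1
    rw [hφ0] at this
    exact this.ne
  intro N k m hkm w y hw hy
  have hcast : (k : ℝ) + (m : ℝ) = 2 ^ N := by exact_mod_cast hkm
  have h2N : (0:ℝ) < 2 ^ N := by positivity
  -- the combination point
  set x : ℝ := ((k : ℝ) * w + (m : ℝ) * y) / 2 ^ N with hxdef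
  have hknn : (0:ℝ) ≤ k := Nat.cast_nonneg k
  have hmnn : (0:ℝ) ≤ m := Nat.cast_nonneg m
  have hminpos : 0 < min w y := lt_min hw.1 hy.1
  have hxlow : 2 ^ N * min w y ≤ (k : ℝ) * w + (m : ℝ) * y := by
    have h1 : (k : ℝ) * min w y ≤ (k : ℝ) * w := by
      apply mul_le_mul_of_nonneg_left (min_le_left _ _) hknn
    have h2 : (m : ℝ) * min w y ≤ (m : ℝ) * y := by
      apply mul_le_mul_of_nonneg_left (min_le_right _ _) hmnn
    nlinarith
  have hx : x ∈ Set.Ioc (0:ℝ) 1 := by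
    constructor
    · apply div_pos _ h2N
      nlinarith
    · rw [div_le_one h2N]
      nlinarith [mul_le_mul_of_nonneg_left hw.2 hknn, mul_le_mul_of_nonneg_left hy.2 hmnn]
  have hxIcc : x ∈ Set.Icc (0:ℝ) 1 := ⟨hx.1.le, hx.2⟩
  set t : ℝ≥0∞ := ((k : ℝ≥0∞) * φ w + (m : ℝ≥0∞) * φ y) / 2 ^ N with htdef
  have hnum_ne : (k : ℝ≥0∞) * φ w + (m : ℝ≥0∞) * φ y ≠ ⊤ := by
    apply ne_of_lt
    apply ENNReal.add_lt_top.2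
    exact ⟨ENNReal.mul_lt_top (ENNReal.natCast_ne_top k).lt_top (hfin w hw).lt_top,
      ENNReal.mul_lt_top (ENNReal.natCast_ne_top m).lt_top (hfin y hy).lt_top⟩
  have htne : t ≠ ⊤ := (ENNReal.div_lt_top hnum_ne (pow_ne_zero _ two_ne_zero)).ne
  -- dyadic convexity of φinv gives `φinv t ≤ x`
  have hP1 : φinv t ≤ x := by
    have := dyadic_convex φinv hmid N k m hkm (φ w) (φ y)
    rwa [hinv w ⟨hw.1.le, hw.2⟩, hinv y ⟨hy.1.le, hy.2⟩] at this
  -- key claim: `φ x ≤ t`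
  have hclaim : φ x ≤ t := by
    by_contra hcon
    push_neg at hcon
    have hxx : φinv (φ x) = x := hinv x hxIcc
    have heq : φinv t = x :=
      le_antisymm hP1 (by rw [← hxx]; exact hinv_anti hcon.le)
    have hφxne : φ x ≠ ⊤ := hfin x hx
    set x' : ℝ := x / 2 with hx'def
    have hx' : x' ∈ Set.Ioc (0:ℝ) 1 := ⟨half_pos hx.1, by linarith [hx.1, hx.2]⟩
    have hx'lt : x' < x := by
      have := hx.1; linarith
    set s' : ℝ≥0∞ := φ x' with hs'def
    have hs'ne : s' ≠ ⊤ := hfin x' hx'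
    have hFS : φ x < s' := hφanti ⟨hx'.1.le, hx'.2⟩ hxIcc hx'lt
    set T : ℝ := t.toReal with hT
    set F : ℝ := (φ x).toReal with hF
    set S : ℝ := s'.toReal with hS
    have hTF : T < F := (ENNReal.toReal_lt_toReal htne hφxne).2 hcon
    have hFS' : F < S := (ENNReal.toReal_lt_toReal hφxne hs'ne).2 hFS
    obtain ⟨N', hN'⟩ := pow_unbounded_of_one_lt (R := ℝ) ((S - T) / (F - T)) one_lt_two
    have h2N' : (0:ℝ) < 2 ^ N' := by positivity
    have hSTle : S - T < (F - T) * 2 ^ N' := by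
      rw [div_lt_iff₀ (by linarith)] at hN'
      linarith
    have hone : 1 ≤ 2 ^ N' := Nat.one_le_two_pow
    have hkm' : (2 ^ N' - 1) + 1 = 2 ^ N' := by omega
    have hcast' : ((2 ^ N' - 1 : ℕ) : ℝ) = 2 ^ N' - 1 := by
      push_cast [Nat.cast_sub hone]; norm_num
    -- real inequality: ((2^N'-1)*T + S)/2^N' ≤ F
    have hreal : (((2 ^ N' - 1 : ℕ) : ℝ) * T + 1 * S) / 2 ^ N' ≤ F := by
      rw [hcast', div_le_iff₀ h2N']
      nlinarith
    -- lift to ℝ≥0∞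
    have hT0 : 0 ≤ T := ENNReal.toReal_nonneg
    have hS0 : 0 ≤ S := ENNReal.toReal_nonneg
    have hA1ne : ((2 ^ N' - 1 : ℕ) : ℝ≥0∞) * t ≠ ⊤ :=
      (ENNReal.mul_lt_top (ENNReal.natCast_ne_top _).lt_top htne.lt_top).ne
    have hA2ne : ((1 : ℕ) : ℝ≥0∞) * s' ≠ ⊤ :=
      (ENNReal.mul_lt_top (ENNReal.natCast_ne_top _).lt_top hs'ne.lt_top).ne
    have hAne : ((2 ^ N' - 1 : ℕ) : ℝ≥0∞) * t + ((1 : ℕ) : ℝ≥0∞) * s' ≠ ⊤ := by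
      rw [ENNReal.add_ne_top]; exact ⟨hA1ne, hA2ne⟩
    have hargle : (((2 ^ N' - 1 : ℕ) : ℝ≥0∞) * t + ((1 : ℕ) : ℝ≥0∞) * s') / 2 ^ N' ≤ φ x := by
      rw [← ENNReal.toReal_le_toReal (ENNReal.div_lt_top hAne (pow_ne_zero _ two_ne_zero)).ne
        hφxne]
      rw [ENNReal.toReal_div, ENNReal.toReal_add hA1ne hA2ne, ENNReal.toReal_mul,
        ENNReal.toReal_mul, ENNReal.toReal_natCast, ENNReal.toReal_natCast,
        ENNReal.toReal_pow, ENNReal.toReal_ofNat]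
      exact_mod_cast hreal
    -- apply φinv, then dyadic convexity to contradict
    have hlow : x ≤ φinv ((((2 ^ N' - 1 : ℕ) : ℝ≥0∞) * t + ((1 : ℕ) : ℝ≥0∞) * s') / 2 ^ N') := by
      rw [← hxx]
      exact hinv_anti hargle
    have hup := dyadic_convex φinv hmid N' (2 ^ N' - 1) 1 hkm' t s'
    rw [heq] at hup
    have hs'inv : φinv s' = x' := hinv x' ⟨hx'.1.le, hx'.2⟩
    rw [hs'inv] at hup
    have : x ≤ (((2 ^ N' - 1 : ℕ) : ℝ) * x + ((1:ℕ):ℝ) * x') / 2 ^ N' := le_trans hlow hup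
    rw [Nat.cast_one] at this
    rw [hcast', le_div_iff₀ h2N'] at this
    nlinarith [hx.1]
  -- conclude by taking toReal
  have hres := ENNReal.toReal_mono htne hclaim
  have hteq : t.toReal = ((k : ℝ) * (φ w).toReal + (m : ℝ) * (φ y).toReal) / 2 ^ N := by
    rw [htdef, ENNReal.toReal_div,
      ENNReal.toReal_add
        (ENNReal.mul_lt_top (ENNReal.natCast_ne_top _).lt_top (hfin w hw).lt_top).ne
        (ENNReal.mul_lt_top (ENNReal.natCast_ne_top _).lt_top (hfin y hy).lt_top).ne,
      ENNReal.toReal_mul, ENNReal.toReal_mul, ENNReal.toReal_natCast, ENNReal.toReal_natCast,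
      ENNReal.toReal_pow, ENNReal.toReal_ofNat]
  rw [← hteq]
  exact hres

lemma convexOn_of_dyadic (f : ℝ → ℝ)
    (hanti : ∀ x y : ℝ, x ∈ Set.Ioc (0:ℝ) 1 → y ∈ Set.Ioc (0:ℝ) 1 → x ≤ y → f y ≤ f x)
    (hdy : ∀ N k m : ℕ, k + m = 2 ^ N → ∀ x y : ℝ, x ∈ Set.Ioc (0:ℝ) 1 →
      y ∈ Set.Ioc (0:ℝ) 1 →
      f (((k : ℝ) * x + (m : ℝ) * y) / 2 ^ N) ≤ ((k : ℝ) * f x + (m : ℝ) * f y) / 2 ^ N) :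
    ConvexOn ℝ (Set.Ioc (0:ℝ) 1) f := by
  have aux : ∀ x y : ℝ, x ∈ Set.Ioc (0:ℝ) 1 → y ∈ Set.Ioc (0:ℝ) 1 → x ≤ y →
      ∀ a b : ℝ, 0 ≤ a → 0 ≤ b → a + b = 1 → f (a * x + b * y) ≤ a * f x + b * f y := by
    intro x y hx hy hxy a b ha hb hab
    have hb' : b = 1 - a := by linarith
    subst hb'
    have ha1 : a ≤ 1 := by linarith
    have hfxy : f y ≤ f x := hanti x y hx hy hxy
    apply _root_.le_of_forall_pos_le_add
    intro ε hε
    -- choose N with (f x - f y) / 2 ^ N < ε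
    obtain ⟨N, hN⟩ := pow_unbounded_of_one_lt (R := ℝ) ((f x - f y) / ε) one_lt_two
    have h2N : (0:ℝ) < 2 ^ N := by positivity
    have hNe : (f x - f y) / 2 ^ N < ε := by
      rw [div_lt_iff₀ hε] at hN
      rw [div_lt_iff₀ h2N]
      nlinarith
    set k : ℕ := ⌈a * 2 ^ N⌉₊ with hk
    have hkle : k ≤ 2 ^ N := by
      rw [hk]
      apply Nat.ceil_le.2
      push_cast
      nlinarith
    set m : ℕ := 2 ^ N - k with hm
    have hkm : k + m = 2 ^ N := by omega
    have hmc : (m : ℝ) = 2 ^ N - k := by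
      rw [hm]
      push_cast [Nat.cast_sub hkle]
      norm_num
    set α : ℝ := (k : ℝ) / 2 ^ N with hα
    have hαa : a ≤ α := by
      rw [hα, le_div_iff₀ h2N]
      exact Nat.le_ceil _
    have hα1 : α ≤ 1 := by
      rw [hα, div_le_one h2N]
      exact_mod_cast hkle
    have hαa' : α ≤ a + 1 / 2 ^ N := by
      rw [hα, div_le_iff₀ h2N]
      have h := Nat.ceil_lt_add_one (by positivity : (0:ℝ) ≤ a * 2 ^ N)
      have h2 : (1 / 2 ^ N : ℝ) * 2 ^ N = 1 := by field_simp
      nlinarith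
    have hz : ((k : ℝ) * x + (m : ℝ) * y) / 2 ^ N = α * x + (1 - α) * y := by
      rw [hmc, hα]; field_simp; try ring
    have hzmem : α * x + (1 - α) * y ∈ Set.Ioc (0:ℝ) 1 := by
      constructor
      · nlinarith [hx.1, hy.1]
      · nlinarith [hx.2, hy.2]
    have hzle : α * x + (1 - α) * y ≤ a * x + (1 - a) * y := by nlinarith
    have hpmem : a * x + (1 - a) * y ∈ Set.Ioc (0:ℝ) 1 := by
      constructor
      · nlinarith [hx.1, hy.1]
      · nlinarith [hx.2, hy.2]
    have h1 : f (a * x + (1 - a) * y) ≤ f (α * x + (1 - α) * y) :=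
      hanti _ _ hzmem hpmem hzle
    have h2 := hdy N k m hkm x y hx hy
    rw [hz] at h2
    have h3 : ((k : ℝ) * f x + (m : ℝ) * f y) / 2 ^ N = α * f x + (1 - α) * f y := by
      rw [hmc, hα]; field_simp; try ring
    rw [h3] at h2
    have hd : (α - a) * (f x - f y) ≤ (1 / 2 ^ N) * (f x - f y) :=
      mul_le_mul_of_nonneg_right (by linarith) (by linarith)
    have hd2 : (1 / 2 ^ N : ℝ) * (f x - f y) = (f x - f y) / 2 ^ N := by ring
    have hexp : α * f x + (1 - α) * f y - (a * f x + (1 - a) * f y)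
        = (α - a) * (f x - f y) := by ring
    linarith
  constructor
  · exact convex_Ioc 0 1
  · intro x hx y hy a b ha hb hab
    simp only [smul_eq_mul]
    rcases le_total x y with h | h
    · exact aux x y hx hy h a b ha hb hab
    · rw [add_comm, add_comm (a * f x)]
      exact aux y x hy hx h b a hb ha (by linarith)

lemma hlp_core (n : ℕ) (f : ℝ → ℝ) (hf : ConvexOn ℝ (Set.Ioc (0:ℝ) 1) f)
    (u v : ℕ → ℝ)
    (hu : ∀ k, k < n → u k ∈ Set.Ioc (0:ℝ) 1) (hv : ∀ k, k < n → v k ∈ Set.Ioc (0:ℝ) 1)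
    (humono : ∀ j k, j ≤ k → k < n → u j ≤ u k)
    (hpre : ∀ k, k < n → ∑ i ∈ range k, v i ≤ ∑ i ∈ range k, u i)
    (htot : ∑ i ∈ range n, u i = ∑ i ∈ range n, v i) :
    ∑ i ∈ range n, f (u i) ≤ ∑ i ∈ range n, f (v i) := by
  rcases Nat.eq_zero_or_pos n with rfl | hn
  · simp
  classical
  set P : Finset ℝ := (range n).image u ∪ (range n).image v with hP
  have hPne : P.Nonempty := by
    refine ⟨u 0, ?_⟩
    rw [hP]
    exact mem_union_left _ (mem_image_of_mem u (mem_range.2 hn))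
  have hPmem : ∀ x ∈ P, x ∈ Set.Ioc (0:ℝ) 1 := by
    intro x hx
    rw [hP, mem_union] at hx
    rcases hx with hx | hx <;> obtain ⟨i, hi, rfl⟩ := mem_image.1 hx
    · exact hu i (mem_range.1 hi)
    · exact hv i (mem_range.1 hi)
  set m0 : ℝ := P.min' hPne with hm0
  have hm0mem : m0 ∈ Set.Ioc (0:ℝ) 1 := hPmem _ (P.min'_mem hPne)
  set p0 : ℝ := m0 / 2 with hp0
  have hp0mem : p0 ∈ Set.Ioc (0:ℝ) 1 := ⟨half_pos hm0mem.1, by linarith [hm0mem.1, hm0mem.2]⟩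
  have hp0lt : ∀ x ∈ P, p0 < x := by
    intro x hx
    have h1 : m0 ≤ x := P.min'_le x hx
    have := hm0mem.1
    rw [hp0]
    linarith
  set Q : Finset ℝ := insert p0 P with hQ
  have hQmem : ∀ x ∈ Q, x ∈ Set.Ioc (0:ℝ) 1 := by
    intro x hx
    rw [hQ, mem_insert] at hx
    rcases hx with rfl | hx
    · exact hp0mem
    · exact hPmem x hx
  have huP : ∀ i, i < n → u i ∈ P := fun i hi =>
    mem_union_left _ (mem_image_of_mem u (mem_range.2 hi))
  have hvP : ∀ i, i < n → v i ∈ P := fun i hi =>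
    mem_union_right _ (mem_image_of_mem v (mem_range.2 hi))
  have hQne : ∀ i, i < n → (Q.filter (· < u i)).Nonempty := by
    intro i hi
    exact ⟨p0, mem_filter.2 ⟨mem_insert_self _ _, hp0lt _ (huP i hi)⟩⟩
  set c : ℕ → ℝ := fun i =>
    if h : (Q.filter (· < u i)).Nonempty then
      (Q.filter (· < u i)).sup' h (fun w => (f (u i) - f w) / (u i - w))
    else 0 with hc
  -- c is monotone on [0, n)
  have hcmono : ∀ i j, i ≤ j → j < n → c i ≤ c j := by
    intro i j hij hj
    have hi : i < n := lt_of_le_of_lt hij hj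
    simp only [hc]
    rw [dif_pos (hQne i hi), dif_pos (hQne j hj)]
    apply Finset.sup'_le
    intro w hw
    obtain ⟨hwQ, hwlt⟩ := mem_filter.1 hw
    have hwlt' : w < u j := lt_of_lt_of_le hwlt (humono i j hij hj)
    have step : (f (u i) - f w) / (u i - w) ≤ (f (u j) - f w) / (u j - w) :=
      hf.secant_mono (hQmem w hwQ) (hu i hi) (hu j hj) hwlt.ne' hwlt'.ne'
        (humono i j hij hj)
    have hwmem : w ∈ Q.filter (· < u j) := mem_filter.2 ⟨hwQ, hwlt'⟩
    exact le_trans step (Finset.le_sup' (fun z => (f (u j) - f z) / (u j - z)) hwmem)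
  -- subgradient inequality
  have hsub : ∀ i, i < n → f (u i) + c i * (v i - u i) ≤ f (v i) := by
    intro i hi
    rcases lt_trichotomy (v i) (u i) with hlt | heq | hgt
    · have hmem : v i ∈ Q.filter (· < u i) :=
        mem_filter.2 ⟨mem_insert_of_mem (hvP i hi), hlt⟩
      have h1 : (f (u i) - f (v i)) / (u i - v i) ≤ c i := by
        simp only [hc]
        rw [dif_pos (hQne i hi)]
        exact Finset.le_sup' (fun z => (f (u i) - f z) / (u i - z)) hmem
      have h2 : v i - u i ≤ 0 := by linarith
      have h3 := mul_le_mul_of_nonpos_right h1 h2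
      have hne : u i - v i ≠ 0 := by linarith
      have h4 : (f (u i) - f (v i)) / (u i - v i) * (v i - u i) = f (v i) - f (u i) := by
        field_simp
        ring
      rw [h4] at h3
      linarith
    · rw [heq]; simp
    · have h1 : c i ≤ (f (v i) - f (u i)) / (v i - u i) := by
        simp only [hc]
        rw [dif_pos (hQne i hi)]
        apply Finset.sup'_le
        intro w hw
        obtain ⟨hwQ, hwlt⟩ := mem_filter.1 hw
        exact hf.slope_mono_adjacent (hQmem w hwQ) (hv i hi) hwlt hgt
      have h2 : 0 ≤ v i - u i := by linarith
      have h3 := mul_le_mul_of_nonneg_right h1 h2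
      have h4 : (f (v i) - f (u i)) / (v i - u i) * (v i - u i) = f (v i) - f (u i) :=
        div_mul_cancel₀ _ (by linarith : v i - u i ≠ 0)
      rw [h4] at h3
      linarith
  -- Abel summation: ∑ c i * (v i - u i) ≥ 0
  have habel : 0 ≤ ∑ i ∈ range n, c i * (v i - u i) := by
    have hparts := Finset.sum_range_by_parts c (fun i => v i - u i) n
    simp only [smul_eq_mul] at hparts
    have hG : ∀ k, ∑ i ∈ range k, (v i - u i) = ∑ i ∈ range k, v i - ∑ i ∈ range k, u i :=
      fun k => Finset.sum_sub_distrib _ _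
    rw [hparts]
    have hGn : ∑ i ∈ range n, (v i - u i) = 0 := by rw [hG]; linarith [htot]
    rw [hGn, mul_zero]
    have : ∀ i ∈ range (n - 1), (c (i + 1) - c i) * ∑ j ∈ range (i + 1), (v j - u j) ≤ 0 := by
      intro i hi
      have hi' : i + 1 < n := by
        have := mem_range.1 hi
        omega
      have h1 : 0 ≤ c (i + 1) - c i := by
        have := hcmono i (i + 1) (Nat.le_succ i) hi'
        linarith
      have h2 : ∑ j ∈ range (i + 1), (v j - u j) ≤ 0 := by
        rw [hG]
        linarith [hpre (i + 1) hi']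
      exact mul_nonpos_of_nonneg_of_nonpos h1 h2
    have hsum := Finset.sum_le_sum this
    simp only [Finset.sum_const_zero] at hsum
    linarith
  -- combine
  have hfinal := Finset.sum_le_sum (fun i hi => hsub i (mem_range.1 hi))
  rw [Finset.sum_add_distrib] at hfinal
  linarith

lemma strictMono_le_apply {j : ℕ} (g : Fin j → ℕ) (hg : StrictMono g) :
    ∀ k : Fin j, (k : ℕ) ≤ g k := by
  intro k
  obtain ⟨m, hm⟩ : ∃ m, (k : ℕ) = m := ⟨k, rfl⟩
  induction m generalizing k with
  | zero => omega
  | succ m ih =>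
    have hmj : m < j := by omega
    have h1 : (⟨m, hmj⟩ : Fin j) < k := by
      rw [Fin.lt_def]
      simp [hm]
    have h2 := hg h1
    have h3 : m ≤ g ⟨m, hmj⟩ := by simpa using ih ⟨m, hmj⟩ rfl
    omega

lemma prefix_le_subset_sum {n j : ℕ} (hj : j ≤ n) (w : Fin n → ℝ) (hw : Monotone w)
    (s : Finset (Fin n)) (hs : s.card = j) :
    ∑ k : Fin j, w (Fin.castLE hj k) ≤ ∑ i ∈ s, w i := by
  classical
  have e := s.orderIsoOfFin hs
  have hsum : ∑ i ∈ s, w i = ∑ k : Fin j, w (e k) := by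
    rw [← Finset.sum_coe_sort s w]
    exact (Equiv.sum_comp e.toEquiv (fun i : s => w i)).symm
  rw [hsum]
  apply Finset.sum_le_sum
  intro k _
  apply hw
  have hval : (k : ℕ) ≤ ((e k : Fin n) : ℕ) := by
    apply strictMono_le_apply (fun k => ((e k : Fin n) : ℕ))
    intro a b hab
    have : (e a : Fin n) < (e b : Fin n) := by
      have := e.strictMono hab
      exact_mod_cast this
    exact_mod_cast this
  exact hval
  -- goal : Fin.castLE hj k ≤ e k as Fin n? handled by hw arg

lemma sumSmallest_eq {n : ℕ} (x : Fin n → ℝ) {j : ℕ} (hj : j ≤ n) :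
    sumSmallest j x = ∑ k : Fin j, x (Tuple.sort x (Fin.castLE hj k)) := by
  classical
  set σ := Tuple.sort x with hσ
  have hwmono : Monotone (x ∘ σ) := Tuple.monotone_sort x
  set emb : Fin j ↪ Fin n :=
    ⟨fun k => σ (Fin.castLE hj k), fun a b hab => by
      have := σ.injective hab
      exact Fin.castLE_injective hj this⟩ with hemb
  set s₀ : Finset (Fin n) := Finset.map emb univ with hs₀
  have hcard : s₀.card = j := by simp [hs₀]
  have hsum₀ : ∑ i ∈ s₀, x i = ∑ k : Fin j, x (σ (Fin.castLE hj k)) := by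
    rw [hs₀, Finset.sum_map]
    rfl
  set A : Set ℝ :=
    (fun s : Finset (Fin n) => ∑ i ∈ s, x i) '' {s : Finset (Fin n) | s.card = j} with hA
  have hAfin : A.Finite := Set.Finite.image _ (Set.toFinite _)
  have hAne : A.Nonempty := ⟨_, ⟨s₀, hcard, rfl⟩⟩
  have hbdd : BddBelow A := hAfin.bddBelow
  apply le_antisymm
  · exact le_trans (csInf_le hbdd ⟨s₀, hcard, rfl⟩) (le_of_eq hsum₀)
  · apply le_csInf hAne
    rintro r ⟨s, hs, rfl⟩
    simp only [Set.mem_setOf_eq] at hs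
    show ∑ k : Fin j, x (σ (Fin.castLE hj k)) ≤ ∑ i ∈ s, x i
    have hmap : ∑ i ∈ s, x i = ∑ i ∈ s.map σ.symm.toEmbedding, (x ∘ σ) i := by
      rw [Finset.sum_map]
      apply Finset.sum_congr rfl
      intro i _
      simp
    have hcard' : (s.map σ.symm.toEmbedding).card = j := by
      rw [Finset.card_map]; exact hs
    have := prefix_le_subset_sum hj (x ∘ σ) hwmono (s.map σ.symm.toEmbedding) hcard'
    rw [hmap]
    exact this

/-- Every `n`-dimensional Archimedean copula is Schur-concave: if
`C u = φ⁻¹ (∑ i, φ (u i))` with generator `φ : [0,1] → [0,∞]` strictly decreasing,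
`φ 1 = 0`, `φ 0 = ∞`, and `φ⁻¹` decreasing and (midpoint) convex, then
`u ≼_m v` implies `C u ≥ C v`. -/
theorem archimedean_copula_schurConcave {n : ℕ}
    (φ : ℝ → ℝ≥0∞) (φinv : ℝ≥0∞ → ℝ)
    (hφanti : StrictAntiOn φ (Set.Icc 0 1))
    (hφ1 : φ 1 = 0) (hφ0 : φ 0 = ⊤)
    (hinv : ∀ t ∈ Set.Icc (0:ℝ) 1, φinv (φ t) = t)
    (hinv_anti : Antitone φinv)
    (hinv_convex : ∀ a b : ℝ≥0∞, φinv ((a + b) / 2) ≤ (φinv a + φinv b) / 2)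
    (C : (Fin n → ℝ) → ℝ)
    (hC : ∀ u : Fin n → ℝ, C u = φinv (∑ i, φ (u i)))
    (u v : Fin n → ℝ)
    (hu : ∀ i, u i ∈ Set.Icc (0:ℝ) 1) (hv : ∀ i, v i ∈ Set.Icc (0:ℝ) 1)
    (hmaj : Majorized u v) :
    C v ≤ C u := by
  classical
  have h0Icc : (0:ℝ) ∈ Set.Icc (0:ℝ) 1 := ⟨le_refl _, zero_le_one⟩
  have hinvtop : φinv ⊤ = 0 := by rw [← hφ0]; exact hinv 0 h0Icc
  have hfin : ∀ z : ℝ, z ∈ Set.Ioc (0:ℝ) 1 → φ z ≠ ⊤ := by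
    intro z hz
    have := hφanti h0Icc ⟨hz.1.le, hz.2⟩ hz.1
    rw [hφ0] at this
    exact this.ne
  rw [hC u, hC v]
  -- Case: some coordinate of `v` is zero.
  by_cases hvz : ∃ i, v i = 0
  · obtain ⟨i0, hi0⟩ := hvz
    have hvtop : ∑ i, φ (v i) = ⊤ :=
      ENNReal.sum_eq_top.2 ⟨i0, mem_univ _, by rw [hi0, hφ0]⟩
    rw [hvtop]
    exact hinv_anti le_top
  push_neg at hvz
  have hvpos : ∀ i, v i ∈ Set.Ioc (0:ℝ) 1 :=
    fun i => ⟨(hv i).1.lt_of_ne (Ne.symm (hvz i)), (hv i).2⟩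
  rcases Nat.eq_zero_or_pos n with hn0 | hn
  · subst hn0
    simp
  have hne : Nonempty (Fin n) := ⟨⟨0, hn⟩⟩
  -- all coordinates of `u` are positive
  have hupos : ∀ i, u i ∈ Set.Ioc (0:ℝ) 1 := by
    intro i
    refine ⟨?_, (hu i).2⟩
    rcases eq_or_lt_of_le (hu i).1 with heq | h
    swap
    · exact h
    exfalso
    rcases Nat.lt_or_ge n 2 with hn1 | hn2
    · -- n = 1
      have hn1' : n = 1 := by omega
      subst hn1'
      have htot1 := hmaj.1
      rw [Fin.sum_univ_one, Fin.sum_univ_one] at htot1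
      have hi : i = 0 := Subsingleton.elim _ _
      rw [hi] at heq
      have hv0 := (hvpos 0).1
      rw [← htot1] at hv0
      linarith
    · have hkey := hmaj.2 1 le_rfl (by omega)
      have hbdd : BddBelow ((fun s : Finset (Fin n) => ∑ i ∈ s, u i) ''
          {s : Finset (Fin n) | s.card = 1}) :=
        (Set.Finite.image _ (Set.toFinite _)).bddBelow
      have hup : sumSmallest 1 u ≤ u i := by
        apply csInf_le hbdd
        exact ⟨{i}, by simp, by simp⟩
      set b : ℝ := (univ.image v).min' (by simp [Finset.univ_nonempty]) with hb
      have hbpos : 0 < b := by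
        have := Finset.min'_mem (univ.image v) (by simp [Finset.univ_nonempty])
        rw [← hb] at this
        obtain ⟨i', _, hi'⟩ := Finset.mem_image.1 this
        rw [← hi']
        exact (hvpos i').1
      have hlow : b ≤ sumSmallest 1 v := by
        apply le_csInf
        · exact ⟨∑ x ∈ ({i} : Finset (Fin n)), v x, ⟨{i}, by simp, rfl⟩⟩
        rintro r ⟨s, hs, rfl⟩
        simp only [Set.mem_setOf_eq] at hs
        obtain ⟨i', rfl⟩ := Finset.card_eq_one.1 hs
        show b ≤ ∑ x ∈ ({i'} : Finset (Fin n)), v x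
        rw [Finset.sum_singleton]
        exact Finset.min'_le _ _ (Finset.mem_image_of_mem v (mem_univ i'))
      rw [← heq] at hup
      linarith
  -- Main case: apply the HLP inequality to the sorted tuples.
  set f : ℝ → ℝ := fun t => (φ t).toReal with hfdef
  have hfanti : ∀ a b : ℝ, a ∈ Set.Ioc (0:ℝ) 1 → b ∈ Set.Ioc (0:ℝ) 1 → a ≤ b →
      f b ≤ f a := by
    intro a b ha hb hab
    rcases eq_or_lt_of_le hab with rfl | hlt
    · exact le_refl _
    · have := hφanti ⟨ha.1.le, ha.2⟩ ⟨hb.1.le, hb.2⟩ hlt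
      exact ENNReal.toReal_mono (hfin a ha) this.le
  have hfconv : ConvexOn ℝ (Set.Ioc (0:ℝ) 1) f :=
    convexOn_of_dyadic f hfanti
      (f_dyadic φ φinv hφanti hφ0 hinv hinv_anti hinv_convex)
  set σ := Tuple.sort u with hσ
  set τ := Tuple.sort v with hτ
  set U : ℕ → ℝ := fun k => if h : k < n then u (σ ⟨k, h⟩) else 1 with hU
  set V : ℕ → ℝ := fun k => if h : k < n then v (τ ⟨k, h⟩) else 1 with hV
  have hUmem : ∀ k, k < n → U k ∈ Set.Ioc (0:ℝ) 1 := by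
    intro k hk
    simp only [hU]
    rw [dif_pos hk]
    exact hupos _
  have hVmem : ∀ k, k < n → V k ∈ Set.Ioc (0:ℝ) 1 := by
    intro k hk
    simp only [hV]
    rw [dif_pos hk]
    exact hvpos _
  have hUmono : ∀ j k : ℕ, j ≤ k → k < n → U j ≤ U k := by
    intro j k hjk hk
    have hj : j < n := lt_of_le_of_lt hjk hk
    simp only [hU]
    rw [dif_pos hj, dif_pos hk]
    exact Tuple.monotone_sort u (show (⟨j, hj⟩ : Fin n) ≤ ⟨k, hk⟩ by
      rw [Fin.mk_le_mk]; exact hjk)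
  -- prefix sums of the sorted tuples are the `sumSmallest`
  have hprefixU : ∀ k : ℕ, (hk : k ≤ n) →
      ∑ i ∈ range k, U i = ∑ kk : Fin k, u (σ (Fin.castLE hk kk)) := by
    intro k hk
    rw [← Fin.sum_univ_eq_sum_range]
    apply Finset.sum_congr rfl
    intro i _
    have hi : (i : ℕ) < n := lt_of_lt_of_le i.isLt hk
    simp only [hU]
    rw [dif_pos hi]
    congr
  have hprefixV : ∀ k : ℕ, (hk : k ≤ n) →
      ∑ i ∈ range k, V i = ∑ kk : Fin k, v (τ (Fin.castLE hk kk)) := by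
    intro k hk
    rw [← Fin.sum_univ_eq_sum_range]
    apply Finset.sum_congr rfl
    intro i _
    have hi : (i : ℕ) < n := lt_of_lt_of_le i.isLt hk
    simp only [hV]
    rw [dif_pos hi]
    congr
  have hpre : ∀ k, k < n → ∑ i ∈ range k, V i ≤ ∑ i ∈ range k, U i := by
    intro k hk
    rcases Nat.eq_zero_or_pos k with rfl | hk1
    · simp
    have h := hmaj.2 k hk1 (by omega)
    rw [sumSmallest_eq u (le_of_lt hk), sumSmallest_eq v (le_of_lt hk)] at h
    rw [hprefixU k (le_of_lt hk), hprefixV k (le_of_lt hk)]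
    exact h
  have htot : ∑ i ∈ range n, U i = ∑ i ∈ range n, V i := by
    rw [hprefixU n le_rfl, hprefixV n le_rfl]
    have h1 : ∑ kk : Fin n, u (σ (Fin.castLE le_rfl kk)) = ∑ i, u i := by
      rw [show (fun kk => u (σ (Fin.castLE le_rfl kk))) = fun kk => u (σ kk) from
        funext fun kk => by congr]
      exact Equiv.sum_comp σ u
    have h2 : ∑ kk : Fin n, v (τ (Fin.castLE le_rfl kk)) = ∑ i, v i := by
      rw [show (fun kk => v (τ (Fin.castLE le_rfl kk))) = fun kk => v (τ kk) from
        funext fun kk => by congr]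
      exact Equiv.sum_comp τ v
    rw [h1, h2]
    exact hmaj.1
  have hsum := hlp_core n f hfconv U V hUmem hVmem hUmono hpre htot
  -- convert back to `ℝ≥0∞` sums
  have hUeq : ∑ i ∈ range n, f (U i) = (∑ i, φ (u i)).toReal := by
    rw [ENNReal.toReal_sum (fun i _ => hfin (u i) (hupos i)), ← Fin.sum_univ_eq_sum_range]
    rw [show (fun (i : Fin n) => f (U i.val)) = fun i => f (u (σ i)) from
      funext fun i => by simp only [hU]; rw [dif_pos i.isLt]]
    exact Equiv.sum_comp σ (fun i => f (u i))
  have hVeq : ∑ i ∈ range n, f (V i) = (∑ i, φ (v i)).toReal := by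
    rw [ENNReal.toReal_sum (fun i _ => hfin (v i) (hvpos i)), ← Fin.sum_univ_eq_sum_range]
    rw [show (fun (i : Fin n) => f (V i.val)) = fun i => f (v (τ i)) from
      funext fun i => by simp only [hV]; rw [dif_pos i.isLt]]
    exact Equiv.sum_comp τ (fun i => f (v i))
  rw [hUeq, hVeq] at hsum
  have hAne : ∑ i, φ (u i) ≠ ⊤ := by
    rw [Ne, ENNReal.sum_eq_top]
    push_neg
    exact fun i _ => hfin (u i) (hupos i)
  have hBne : ∑ i, φ (v i) ≠ ⊤ := by
    rw [Ne, ENNReal.sum_eq_top]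
    push_neg
    exact fun i _ => hfin (v i) (hvpos i)
  exact hinv_anti ((ENNReal.toReal_le_toReal hAne hBne).1 hsum)
end

section
/- Suppose F̄(x;λ) is increasing and concave in λ for each x ≥ 0, and the survival copula C_R is Schur-concave. If ∏ᵢ p*ᵢ ≤ ∏ᵢ pᵢ and (λ₁,…,λₙ) is weakly supermajorized by (λ*₁,…,λ*ₙ), then Y*_{1:n} ≤_st Y_{1:n}, i.e., (∏ᵢ p*ᵢ) C_R(F̄(x;λ*₁),…,F̄(x;λ*ₙ)) ≤ (∏ᵢ pᵢ) C_R(F̄(x;λ₁),…,F̄(x;λₙ)) for all x ≥ 0. -/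
open Finset

/-- `x` is weakly supermajorized by `y` (`x ≼^w y`). -/
def WeakSupermajorized {n : ℕ} (x y : Fin n → ℝ) : Prop :=
  ∀ j : ℕ, 1 ≤ j → j ≤ n → sumSmallest j y ≤ sumSmallest j x

/-- `C` is Schur-concave. -/
def SchurConcave {n : ℕ} (C : (Fin n → ℝ) → ℝ) : Prop :=
  ∀ u v : Fin n → ℝ, Majorized u v → C v ≤ C u

/- strict mono Fin k → ℕ grows at least like i -/
lemma aux_strictMono_le {k : ℕ} (f : Fin k → ℕ) (hf : StrictMono f) :
    ∀ i : Fin k, (i : ℕ) ≤ f i := by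
  suffices h : ∀ m (hmk : m < k), m ≤ f ⟨m, hmk⟩ by
    intro i; simpa using h i.1 i.2
  intro m
  induction m with
  | zero => intro hmk; exact Nat.zero_le _
  | succ j ih =>
      intro hmk
      have hj : j < k := Nat.lt_of_succ_lt hmk
      have h1 : f ⟨j, hj⟩ < f ⟨j + 1, hmk⟩ := hf (by simp [Fin.lt_def])
      have h2 : j ≤ f ⟨j, hj⟩ := ih hj
      omega

lemma aux_prefix_le_sum {n : ℕ} (y : Fin n → ℝ) (hm : Monotone y) (k : ℕ) (hk : k ≤ n)
    (S : Finset (Fin n)) (hS : S.card = k) :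
    ∑ i : Fin k, y (Fin.castLE hk i) ≤ ∑ i ∈ S, y i := by
  have e := S.orderIsoOfFin hS
  have hsm : StrictMono (fun i : Fin k => ((e i : Fin n) : ℕ)) := by
    intro a b hab
    have : (e a : Fin n) < (e b : Fin n) := by
      exact_mod_cast e.strictMono hab
    exact this
  have hle : ∀ i : Fin k, (i : ℕ) ≤ ((e i : Fin n) : ℕ) := aux_strictMono_le _ hsm
  have hsum : ∑ i ∈ S, y i = ∑ i : Fin k, y (e i) := by
    rw [← Finset.sum_coe_sort S y]
    exact (Fintype.sum_equiv e.toEquiv _ _ (fun i => rfl)).symm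
  rw [hsum]
  apply Finset.sum_le_sum
  intro i _
  exact hm (show Fin.castLE hk i ≤ (e i : Fin n) from by
    rw [Fin.le_def]; simpa using hle i)

lemma aux_sumSmallest_eq {n : ℕ} (x : Fin n → ℝ) (π : Equiv.Perm (Fin n))
    (hm : Monotone (x ∘ π)) (Z : ℕ → ℝ) (hZ : ∀ i (h : i < n), Z i = x (π ⟨i, h⟩))
    (k : ℕ) (hk : k ≤ n) :
    sumSmallest k x = ∑ i ∈ Finset.range k, Z i := by
  have hZ' : ∑ i : Fin k, x (π (Fin.castLE hk i)) = ∑ i ∈ Finset.range k, Z i := by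
    rw [← Fin.sum_univ_eq_sum_range Z k]
    refine Finset.sum_congr rfl fun i _ => ?_
    rw [hZ i (lt_of_lt_of_le i.2 hk)]
    rfl
  set S₀ : Finset (Fin n) := Finset.image (fun i : Fin k => π (Fin.castLE hk i)) Finset.univ with hS₀
  have hinj : Function.Injective (fun i : Fin k => π (Fin.castLE hk i)) :=
    π.injective.comp (Fin.castLE_injective hk)
  have hcard : S₀.card = k := by
    rw [hS₀, Finset.card_image_of_injective _ hinj, Finset.card_univ, Fintype.card_fin]
  have hsum₀ : ∑ i ∈ S₀, x i = ∑ i : Fin k, x (π (Fin.castLE hk i)) := by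
    rw [hS₀, Finset.sum_image (fun a _ b _ h => hinj h)]
  have hbdd : BddBelow ((fun s : Finset (Fin n) => ∑ i ∈ s, x i) ''
      {s : Finset (Fin n) | s.card = k}) := (Set.toFinite _).bddBelow
  apply le_antisymm
  · refine csInf_le hbdd ?_
    exact ⟨S₀, hcard, show ∑ i ∈ S₀, x i = ∑ i ∈ Finset.range k, Z i from hsum₀.trans hZ'⟩
  · refine le_csInf ⟨_, S₀, hcard, rfl⟩ ?_
    rintro v ⟨S, hScard, rfl⟩
    simp only
    rw [← hZ']
    have : ∑ i ∈ S, x i = ∑ j ∈ S.map π.symm.toEmbedding, (x ∘ π) j := by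
      rw [Finset.sum_map]
      refine Finset.sum_congr rfl fun i _ => ?_
      simp
    rw [this]
    exact aux_prefix_le_sum (x ∘ π) hm k hk _ (by rw [Finset.card_map]; exact hScard)

lemma aux_sum_eq {n : ℕ} (x : Fin n → ℝ) (π : Equiv.Perm (Fin n))
    (Z : ℕ → ℝ) (hZ : ∀ i (h : i < n), Z i = x (π ⟨i, h⟩)) :
    ∑ i, x i = ∑ i ∈ Finset.range n, Z i := by
  rw [← Equiv.sum_comp π x, ← Fin.sum_univ_eq_sum_range Z n]
  refine Finset.sum_congr rfl fun i _ => ?_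
  rw [hZ i i.2]

lemma aux_abel_nonneg :
    ∀ (k : ℕ) (c d : ℕ → ℝ), (∀ i, i < k → 0 ≤ c i) →
      (∀ i j, i ≤ j → j < k → c j ≤ c i) →
      (∀ j, j ≤ k → 0 ≤ ∑ i ∈ Finset.range j, d i) →
      0 ≤ ∑ i ∈ Finset.range k, c i * d i := by
  intro k
  induction k with
  | zero => intro c d _ _ _; simp
  | succ k ih =>
    intro c d h0 hanti hP
    have h1 : 0 ≤ ∑ i ∈ range k, (c i - c k) * d i := by
      refine ih (fun i => c i - c k) d ?_ ?_ ?_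
      · intro i hi
        have := hanti i k (le_of_lt hi) (Nat.lt_succ_self k)
        show (0:ℝ) ≤ c i - c k
        linarith
      · intro i j hij hj
        have := hanti i j hij (hj.trans (Nat.lt_succ_self k))
        show c j - c k ≤ c i - c k
        linarith
      · intro j hj; exact hP j (hj.trans (Nat.le_succ k))
    have h2 : 0 ≤ c k * ∑ i ∈ range (k+1), d i :=
      mul_nonneg (h0 k (Nat.lt_succ_self k)) (hP (k+1) le_rfl)
    have e1 : ∑ i ∈ range (k+1), c i * d i
        = ∑ i ∈ range (k+1), (c i - c k) * d i + c k * ∑ i ∈ range (k+1), d i := by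
      rw [Finset.mul_sum, ← Finset.sum_add_distrib]
      exact Finset.sum_congr rfl fun i _ => by ring
    have e2 : ∑ i ∈ range (k+1), (c i - c k) * d i = ∑ i ∈ range k, (c i - c k) * d i := by
      rw [Finset.sum_range_succ]; simp
    rw [e1, e2]; linarith

noncomputable def Dg (g : ℝ → ℝ) (p : ℝ) : ℝ :=
  sSup ((fun q => (g q - g p) / (q - p)) '' Set.Ioi p)

lemma aux_adj {g : ℝ → ℝ} (hgc : ConcaveOn ℝ Set.univ g) {x y z : ℝ} (hxy : x < y)
    (hyz : y < z) : (g z - g y) / (z - y) ≤ (g y - g x) / (y - x) :=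
  hgc.slope_anti_adjacent (Set.mem_univ x) (Set.mem_univ z) hxy hyz

lemma Dg_bddAbove {g : ℝ → ℝ} (hgc : ConcaveOn ℝ Set.univ g) (p : ℝ) :
    BddAbove ((fun q => (g q - g p) / (q - p)) '' Set.Ioi p) := by
  refine ⟨(g p - g (p - 1)) / (p - (p - 1)), ?_⟩
  rintro v ⟨q, hq, rfl⟩
  exact aux_adj hgc (by linarith) hq

lemma le_Dg {g : ℝ → ℝ} (hgc : ConcaveOn ℝ Set.univ g) {p q : ℝ} (hq : p < q) :
    (g q - g p) / (q - p) ≤ Dg g p :=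
  le_csSup (Dg_bddAbove hgc p) ⟨q, hq, rfl⟩

lemma Dg_le {g : ℝ → ℝ} (hgc : ConcaveOn ℝ Set.univ g) {p q : ℝ} (hq : q < p) :
    Dg g p ≤ (g p - g q) / (p - q) := by
  refine csSup_le ⟨_, ⟨p + 1, by simp, rfl⟩⟩ ?_
  rintro v ⟨r, hr, rfl⟩
  exact aux_adj hgc hq hr

lemma Dg_nonneg {g : ℝ → ℝ} (hgc : ConcaveOn ℝ Set.univ g) (hgm : Monotone g) (p : ℝ) :
    0 ≤ Dg g p := by
  refine le_trans ?_ (le_Dg hgc (show p < p + 1 by linarith))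
  have h0 : g p ≤ g (p + 1) := hgm (by linarith)
  have h1 : (0:ℝ) < p + 1 - p := by linarith
  apply div_nonneg <;> linarith

lemma Dg_anti {g : ℝ → ℝ} (hgc : ConcaveOn ℝ Set.univ g) {p q : ℝ} (hpq : p ≤ q) :
    Dg g q ≤ Dg g p := by
  rcases eq_or_lt_of_le hpq with rfl | h
  · exact le_rfl
  · exact le_trans (Dg_le hgc h) (le_Dg hgc h)

lemma Dg_support {g : ℝ → ℝ} (hgc : ConcaveOn ℝ Set.univ g) (p q : ℝ) :
    g q ≤ g p + Dg g p * (q - p) := by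
  rcases lt_trichotomy p q with h | rfl | h
  · have h1 := le_Dg (g := g) hgc h
    rw [div_le_iff₀ (by linarith : (0:ℝ) < q - p)] at h1
    linarith
  · simp
  · have h1 := Dg_le (g := g) hgc h
    have h2 : Dg g p * (p - q) ≤ g p - g q := by
      rw [← le_div_iff₀ (by linarith : (0:ℝ) < p - q)]
      exact h1
    nlinarith [h2]

lemma aux_concave_prefix_mono {g : ℝ → ℝ} (hgm : Monotone g) (hgc : ConcaveOn ℝ Set.univ g)
    (n : ℕ) (Λ Λs : ℕ → ℝ)
    (hΛ : ∀ i j, i ≤ j → j < n → Λ i ≤ Λ j)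
    (H : ∀ j, j ≤ n → ∑ i ∈ Finset.range j, Λs i ≤ ∑ i ∈ Finset.range j, Λ i)
    (k : ℕ) (hk : k ≤ n) :
    ∑ i ∈ Finset.range k, g (Λs i) ≤ ∑ i ∈ Finset.range k, g (Λ i) := by
  have key : 0 ≤ ∑ i ∈ Finset.range k, (Dg g (Λ i)) * (Λ i - Λs i) := by
    refine aux_abel_nonneg k _ _ ?_ ?_ ?_
    · intro i _; exact Dg_nonneg hgc hgm _
    · intro i j hij hj
      exact Dg_anti hgc (hΛ i j hij (lt_of_lt_of_le hj hk))
    · intro j hj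
      rw [Finset.sum_sub_distrib]
      have := H j (hj.trans hk)
      linarith
  have pt : ∀ i, g (Λs i) ≤ g (Λ i) + Dg g (Λ i) * (Λs i - Λ i) := fun i =>
    Dg_support hgc (Λ i) (Λs i)
  have h1 : ∑ i ∈ Finset.range k, g (Λs i)
      ≤ ∑ i ∈ Finset.range k, (g (Λ i) + Dg g (Λ i) * (Λs i - Λ i)) :=
    Finset.sum_le_sum fun i _ => pt i
  have h2 : ∑ i ∈ Finset.range k, (g (Λ i) + Dg g (Λ i) * (Λs i - Λ i))
      = ∑ i ∈ Finset.range k, g (Λ i) - ∑ i ∈ Finset.range k, (Dg g (Λ i)) * (Λ i - Λs i) := by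
    rw [← Finset.sum_sub_distrib]
    exact Finset.sum_congr rfl fun i _ => by ring
  rw [h2] at h1
  linarith

lemma aux_clip_prefix (n : ℕ) (A B : ℕ → ℝ) (t : ℝ)
    (hA : ∀ i j, i ≤ j → j < n → A i ≤ A j)
    (hB : ∀ i j, i ≤ j → j < n → B i ≤ B j)
    (hAB : ∀ j, j ≤ n → ∑ i ∈ Finset.range j, B i ≤ ∑ i ∈ Finset.range j, A i)
    (hsum : ∑ i ∈ Finset.range n, min (A i) t = ∑ i ∈ Finset.range n, B i)
    (k : ℕ) (hk : k ≤ n) :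
    ∑ i ∈ Finset.range k, B i ≤ ∑ i ∈ Finset.range k, min (A i) t := by
  by_cases hall : ∀ i, i < k → A i ≤ t
  · have e : ∑ i ∈ Finset.range k, min (A i) t = ∑ i ∈ Finset.range k, A i :=
      Finset.sum_congr rfl fun i hi => min_eq_left (hall i (Finset.mem_range.1 hi))
    rw [e]; exact hAB k hk
  · push_neg at hall
    obtain ⟨i₁, hi₁k, hi₁t⟩ := hall
    have hex : ∃ i, i < n ∧ t < A i := ⟨i₁, lt_of_lt_of_le hi₁k hk, hi₁t⟩
    classical
    set i₀ := Nat.find hex with hi₀def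
    obtain ⟨hi₀n, hi₀t⟩ := Nat.find_spec hex
    have hi₀min : ∀ i, i < i₀ → i < n → A i ≤ t := by
      intro i hi hin
      by_contra hcon
      exact Nat.find_min hex hi ⟨hin, lt_of_not_ge hcon⟩
    have hi₀k : i₀ ≤ i₁ := by
      by_contra hcon
      exact absurd (hi₀min i₁ (lt_of_not_ge hcon) (lt_of_lt_of_le hi₁k hk)).not_gt
        (not_not.2 hi₁t)
    have hi₀k' : i₀ < k := lt_of_le_of_lt hi₀k hi₁k
    -- W i = t for i₀ ≤ i < n
    have hWt : ∀ i, i₀ ≤ i → i < n → min (A i) t = t := by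
      intro i hi hin
      exact min_eq_right (le_of_lt (lt_of_lt_of_le hi₀t (hA i₀ i hi hin)))
    have hWA : ∀ i, i < i₀ → min (A i) t = A i := by
      intro i hi
      exact min_eq_left (hi₀min i hi (lt_of_lt_of_le hi (le_of_lt hi₀n)))
    -- split sums
    have split : ∀ m, i₀ ≤ m → m ≤ n →
        ∑ i ∈ Finset.range m, min (A i) t
          = ∑ i ∈ Finset.range i₀, A i + (m - i₀ : ℕ) * t := by
      intro m him hmn
      rw [Finset.range_eq_Ico, ← Finset.sum_Ico_consecutive _ (Nat.zero_le i₀) him]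
      congr 1
      · rw [← Finset.range_eq_Ico]
        exact Finset.sum_congr rfl fun i hi => hWA i (Finset.mem_range.1 hi)
      · rw [Finset.sum_congr rfl (fun i hi => hWt i (Finset.mem_Ico.1 hi).1
          (lt_of_lt_of_le (Finset.mem_Ico.1 hi).2 hmn))]
        rw [Finset.sum_const, Nat.card_Ico, nsmul_eq_mul]
    have splitk := split k (le_of_lt hi₀k') hk
    have splitn := split n (le_of_lt hi₀n) le_rfl
    -- global bound : (n - i₀) * t ≤ ∑_{Ico i₀ n} B
    have hBsplit : ∀ m, m ≤ n → ∑ i ∈ Finset.range n, B i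
        = ∑ i ∈ Finset.range m, B i + ∑ i ∈ Finset.Ico m n, B i := by
      intro m hm
      rw [Finset.range_eq_Ico, ← Finset.sum_Ico_consecutive _ (Nat.zero_le m) hm,
        ← Finset.range_eq_Ico]
    have hglob : ((n - i₀ : ℕ) : ℝ) * t ≤ ∑ i ∈ Finset.Ico i₀ n, B i := by
      have h1 := hAB i₀ (le_of_lt hi₀n)
      have h2 := hBsplit i₀ (le_of_lt hi₀n)
      rw [splitn] at hsum
      linarith
    -- want : (n - k) * t ≤ ∑_{Ico k n} B
    have hgoal : ((n - k : ℕ) : ℝ) * t ≤ ∑ i ∈ Finset.Ico k n, B i := by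
      rcases eq_or_lt_of_le hk with rfl | hkn
      · simp
      · -- k < n
        set u : ℕ := n - k with hu
        set v : ℕ := k - i₀ with hv
        have huv : n - i₀ = u + v := by omega
        have hsplit2 : ∑ i ∈ Finset.Ico i₀ n, B i
            = ∑ i ∈ Finset.Ico i₀ k, B i + ∑ i ∈ Finset.Ico k n, B i := by
          rw [Finset.sum_Ico_consecutive _ (le_of_lt hi₀k') hk]
        set M := ∑ i ∈ Finset.Ico i₀ k, B i with hMdef
        set X := ∑ i ∈ Finset.Ico k n, B i with hXdef
        have hM : M ≤ (v : ℝ) * B k := by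
          have h := Finset.sum_le_card_nsmul (Finset.Ico i₀ k) B (B k)
            (fun i hi => hB i k (le_of_lt (Finset.mem_Ico.1 hi).2) hkn)
          rwa [Nat.card_Ico, nsmul_eq_mul] at h
        have hX : (u : ℝ) * B k ≤ X := by
          have h := Finset.card_nsmul_le_sum (Finset.Ico k n) B (B k)
            (fun i hi => hB k i (Finset.mem_Ico.1 hi).1 (Finset.mem_Ico.1 hi).2)
          rwa [Nat.card_Ico, nsmul_eq_mul] at h
        have hupos : 0 < (u : ℝ) := by
          have h : 0 < u := by omega
          exact_mod_cast h
        have hvnn : 0 ≤ (v : ℝ) := Nat.cast_nonneg v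
        have hglob' : ((u:ℝ) + (v:ℝ)) * t ≤ M + X := by
          rw [hsplit2, huv] at hglob
          push_cast at hglob
          exact hglob
        have key : ((u:ℝ) + v) * ((u:ℝ) * t) ≤ ((u:ℝ) + v) * X := by
          have h3 : (u:ℝ) * (((u:ℝ) + v) * t) ≤ (u:ℝ) * (M + X) :=
            mul_le_mul_of_nonneg_left hglob' (le_of_lt hupos)
          have h4 : (u:ℝ) * M ≤ (u:ℝ) * ((v:ℝ) * B k) :=
            mul_le_mul_of_nonneg_left hM (le_of_lt hupos)
          have h5 : (v:ℝ) * ((u:ℝ) * B k) ≤ (v:ℝ) * X :=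
            mul_le_mul_of_nonneg_left hX hvnn
          nlinarith
        exact le_of_mul_le_mul_left key (by linarith)
    -- conclude
    have hBk := hBsplit k hk
    rw [splitn] at hsum
    rw [splitk]
    have hcast : ((n - i₀ : ℕ) : ℝ) * t = ((n - k : ℕ) : ℝ) * t + ((k - i₀ : ℕ) : ℝ) * t := by
      have hnat : n - i₀ = (n - k) + (k - i₀) := by omega
      rw [hnat, Nat.cast_add]
      ring
    linarith

/-- If `F̄(x; λ)` is increasing and concave in `λ` for each `x ≥ 0` and the common
copula `C_R` is Schur-concave, then `∏ p*ᵢ ≤ ∏ pᵢ` and `λ ≼^w λ*` imply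
`Y*_{1:n} ≤_st Y_{1:n}`. -/
theorem smallest_claim_st_order_parameters {n : ℕ}
    (C : (Fin n → ℝ) → ℝ) (Fbar : ℝ → ℝ → ℝ)
    (p pstar lam lamstar : Fin n → ℝ)
    (hp : ∀ i, p i ∈ Set.Icc (0:ℝ) 1) (hpstar : ∀ i, pstar i ∈ Set.Icc (0:ℝ) 1)
    (hFmono : ∀ x : ℝ, 0 ≤ x → Monotone (Fbar x))
    (hFconc : ∀ x : ℝ, 0 ≤ x → ConcaveOn ℝ Set.univ (Fbar x))
    (hFrange : ∀ x l : ℝ, Fbar x l ∈ Set.Icc (0:ℝ) 1)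
    (hCmono : Monotone C) (hCschur : SchurConcave C)
    (hCrange : ∀ u : Fin n → ℝ, C u ∈ Set.Icc (0:ℝ) 1)
    (hprod : ∏ i, pstar i ≤ ∏ i, p i)
    (hmaj : WeakSupermajorized lam lamstar) :
    ∀ x : ℝ, 0 ≤ x →
      (∏ i, pstar i) * C (fun i => Fbar x (lamstar i)) ≤
        (∏ i, p i) * C (fun i => Fbar x (lam i)) := by
  intro x hx
  classical
  have gmono : Monotone (Fbar x) := hFmono x hx
  have gconc : ConcaveOn ℝ Set.univ (Fbar x) := hFconc x hx
  set g : ℝ → ℝ := Fbar x with hg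
  set π : Equiv.Perm (Fin n) := Tuple.sort lam with hπdef
  set π' : Equiv.Perm (Fin n) := Tuple.sort lamstar with hπ'def
  have hπm : Monotone (lam ∘ π) := Tuple.monotone_sort lam
  have hπ'm : Monotone (lamstar ∘ π') := Tuple.monotone_sort lamstar
  set Λ : ℕ → ℝ := fun i => if h : i < n then lam (π ⟨i, h⟩) else 0 with hΛdef
  set Λs : ℕ → ℝ := fun i => if h : i < n then lamstar (π' ⟨i, h⟩) else 0 with hΛsdef
  have hΛZ : ∀ i (h : i < n), Λ i = lam (π ⟨i, h⟩) := fun i h => dif_pos h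
  have hΛsZ : ∀ i (h : i < n), Λs i = lamstar (π' ⟨i, h⟩) := fun i h => dif_pos h
  have hΛmono : ∀ i j, i ≤ j → j < n → Λ i ≤ Λ j := by
    intro i j hij hj
    rw [hΛZ i (lt_of_le_of_lt hij hj), hΛZ j hj]
    exact hπm (show (⟨i, lt_of_le_of_lt hij hj⟩ : Fin n) ≤ ⟨j, hj⟩ from hij)
  have hΛsmono : ∀ i j, i ≤ j → j < n → Λs i ≤ Λs j := by
    intro i j hij hj
    rw [hΛsZ i (lt_of_le_of_lt hij hj), hΛsZ j hj]
    exact hπ'm (show (⟨i, lt_of_le_of_lt hij hj⟩ : Fin n) ≤ ⟨j, hj⟩ from hij)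
  have H : ∀ j, j ≤ n → ∑ i ∈ Finset.range j, Λs i ≤ ∑ i ∈ Finset.range j, Λ i := by
    intro j hj
    rcases Nat.eq_zero_or_pos j with rfl | hj1
    · simp
    · have h := hmaj j hj1 hj
      rwa [aux_sumSmallest_eq lamstar π' hπ'm Λs hΛsZ j hj,
        aux_sumSmallest_eq lam π hπm Λ hΛZ j hj] at h
  have hA : ∀ k, k ≤ n → ∑ i ∈ Finset.range k, g (Λs i) ≤ ∑ i ∈ Finset.range k, g (Λ i) :=
    fun k hk => aux_concave_prefix_mono gmono gconc n Λ Λs hΛmono H k hk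
  -- IVT for the clipping level t
  set φ : ℝ → ℝ := fun t => ∑ i ∈ Finset.range n, min (g (Λ i)) t with hφdef
  have hφcont : Continuous φ :=
    continuous_finset_sum _ (fun i _ => continuous_const.min continuous_id)
  have hφ0 : φ 0 = 0 := by
    refine Finset.sum_eq_zero fun i _ => ?_
    exact min_eq_right (hFrange x (Λ i)).1
  have hφ1 : φ 1 = ∑ i ∈ Finset.range n, g (Λ i) :=
    Finset.sum_congr rfl fun i _ => min_eq_left (hFrange x (Λ i)).2
  have hmem : (∑ i ∈ Finset.range n, g (Λs i)) ∈ Set.Icc (φ 0) (φ 1) := by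
    constructor
    · rw [hφ0]
      exact Finset.sum_nonneg fun i _ => (hFrange x (Λs i)).1
    · rw [hφ1]
      exact hA n le_rfl
  obtain ⟨t, ht01, htval⟩ :=
    intermediate_value_Icc (by norm_num : (0:ℝ) ≤ 1) hφcont.continuousOn hmem
  set W : Fin n → ℝ := fun i => min (g (lam i)) t with hWdef
  have hWm : Monotone (W ∘ π) := fun a b hab => min_le_min (gmono (hπm hab)) le_rfl
  have hWZ : ∀ i (h : i < n), min (g (Λ i)) t = W (π ⟨i, h⟩) := by
    intro i h
    simp only [hWdef]
    rw [hΛZ i h]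
  have htval' : ∑ i ∈ Finset.range n, min (g (Λ i)) t = ∑ i ∈ Finset.range n, g (Λs i) := htval
  have hmaj2 : Majorized W (fun i => g (lamstar i)) := by
    constructor
    · rw [aux_sum_eq W π (fun i => min (g (Λ i)) t) (fun i h => by exact hWZ i h),
        aux_sum_eq (fun i => g (lamstar i)) π' (fun i => g (Λs i))
          (fun i h => by show g (Λs i) = g (lamstar (π' ⟨i, h⟩)); rw [hΛsZ i h])]
      exact htval'
    · intro j hj1 hjn
      have hjn' : j ≤ n := le_trans hjn (Nat.sub_le n 1)
      rw [aux_sumSmallest_eq (fun i => g (lamstar i)) π' (gmono.comp hπ'm)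
          (fun i => g (Λs i))
          (fun i h => by show g (Λs i) = g (lamstar (π' ⟨i, h⟩)); rw [hΛsZ i h]) j hjn',
        aux_sumSmallest_eq W π hWm (fun i => min (g (Λ i)) t) hWZ j hjn']
      exact aux_clip_prefix n (fun i => g (Λ i)) (fun i => g (Λs i)) t
        (fun i j hij hj => gmono (hΛmono i j hij hj))
        (fun i j hij hj => gmono (hΛsmono i j hij hj))
        (fun j hj => hA j hj) htval' j hjn'
  have step1 : C (fun i => g (lamstar i)) ≤ C W := hCschur W _ hmaj2
  have step2 : C W ≤ C (fun i => g (lam i)) :=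
    hCmono (fun i => min_le_left _ _)
  have h0 : 0 ≤ ∏ i, pstar i := Finset.prod_nonneg fun i _ => (hpstar i).1
  have hC0 : 0 ≤ C (fun i => g (lam i)) := (hCrange _).1
  calc (∏ i, pstar i) * C (fun i => g (lamstar i))
      ≤ (∏ i, pstar i) * C (fun i => g (lam i)) :=
        mul_le_mul_of_nonneg_left (step1.trans step2) h0
    _ ≤ (∏ i, p i) * C (fun i => g (lam i)) :=
        mul_le_mul_of_nonneg_right hprod hC0
end

section
/- Let F̄(x) ∈ (0,1] be a baseline survival function, θ ≥ 1, and suppose ∏ᵢ pᵢ = ∏ᵢ p*ᵢ ∈ (0,1). Under the Gumbel–Hougaard copula with PHR margins F̄(x;λᵢ) = F̄(x)^{λᵢ}, the smallest claim amount Y_{1:n} has density (for x > 0) proportional to the density of a random variable with survival function F̄(x)^{Λ} where Λ = (∑ᵢ λᵢ^θ)^{1/θ}. Then Y*_{1:n} ≤_lr Y_{1:n} if and only if ∑ᵢ λᵢ^θ = ∑ᵢ (λ*ᵢ)^θ. -/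
open Finset Filter Topology

/-- Under the Gumbel–Hougaard copula with PHR margins `F̄(x)^{λᵢ}` and
`∏ pᵢ = ∏ p*ᵢ ∈ (0,1)`, the likelihood ratio `g_{Y_{1:n}} / g_{Y*_{1:n}}`
(equal to `(1-p)/(1-p*)` at `0` and
`(p/p*) (A/A*)^{1/θ} F̄(x)^{A^{1/θ} - A*^{1/θ}}` for `x > 0`, with
`A = ∑ λᵢ^θ`, `A* = ∑ (λ*ᵢ)^θ`) is increasing on `[0,∞)` — i.e.
`Y*_{1:n} ≤_lr Y_{1:n}` — if and only if `∑ λᵢ^θ = ∑ (λ*ᵢ)^θ`. -/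
theorem smallest_claim_lr_iff_sums {n : ℕ} (hn : 0 < n) (θ : ℝ) (hθ : 1 ≤ θ)
    (Fbar : ℝ → ℝ)
    (hFpos : ∀ x, 0 < Fbar x) (hFle : ∀ x, Fbar x ≤ 1)
    (hF0 : Fbar 0 = 1) (hFanti : StrictAntiOn Fbar (Set.Ici 0))
    (hFcont : Continuous Fbar)
    (lam lamstar : Fin n → ℝ)
    (hlam : ∀ i, 0 < lam i) (hlamstar : ∀ i, 0 < lamstar i)
    (p pstar : ℝ) (hp : p ∈ Set.Ioo (0:ℝ) 1) (hpstar : pstar ∈ Set.Ioo (0:ℝ) 1)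
    (hpp : p = pstar) :
    MonotoneOn (fun x : ℝ =>
        if x = 0 then (1 - p) / (1 - pstar)
        else (p / pstar) * ((∑ i, lam i ^ θ) / (∑ i, lamstar i ^ θ)) ^ (1 / θ) *
          Fbar x ^ ((∑ i, lam i ^ θ) ^ (1 / θ) - (∑ i, lamstar i ^ θ) ^ (1 / θ)))
      (Set.Ici 0) ↔
      (∑ i, lam i ^ θ) = ∑ i, lamstar i ^ θ := by
  subst hpp
  obtain ⟨hp0, hp1⟩ := hp
  have hθ0 : (0:ℝ) < θ := lt_of_lt_of_le one_pos hθ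
  have hinv : (0:ℝ) < 1 / θ := by positivity
  have hne : (Finset.univ : Finset (Fin n)).Nonempty := by
    haveI : Nonempty (Fin n) := ⟨⟨0, hn⟩⟩
    exact Finset.univ_nonempty
  set A := ∑ i, lam i ^ θ with hAdef
  set B := ∑ i, lamstar i ^ θ with hBdef
  have hA : 0 < A :=
    Finset.sum_pos (fun i _ => Real.rpow_pos_of_pos (hlam i) θ) hne
  have hB : 0 < B :=
    Finset.sum_pos (fun i _ => Real.rpow_pos_of_pos (hlamstar i) θ) hne
  have h1p : (1:ℝ) - p ≠ 0 := sub_ne_zero.mpr (ne_of_gt hp1)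
  constructor
  · intro hmono
    rcases lt_trichotomy A B with hlt | heq | hgt
    · -- A < B : limit at 0⁺ is (A/B)^{1/θ} < 1, contradicting value 1 at 0
      exfalso
      set d := A ^ (1/θ) - B ^ (1/θ) with hddef
      have hc : (A / B) ^ (1/θ) < 1 :=
        Real.rpow_lt_one (by positivity) ((div_lt_one hB).mpr hlt) hinv
      have key : ∀ x : ℝ, 0 < x →
          (1:ℝ) ≤ p / p * (A / B) ^ (1/θ) * Fbar x ^ d := by
        intro x hx
        have h := hmono (Set.self_mem_Ici) (Set.mem_Ici.mpr hx.le) hx.le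
        simp only [if_pos rfl, if_neg hx.ne'] at h
        rwa [div_self h1p] at h
      have hcont : ContinuousAt
          (fun x : ℝ => p / p * (A / B) ^ (1/θ) * Fbar x ^ d) 0 :=
        continuousAt_const.mul
          ((hFcont.continuousAt).rpow_const (Or.inl (hFpos 0).ne'))
      have ht : Tendsto (fun x : ℝ => p / p * (A / B) ^ (1/θ) * Fbar x ^ d)
          (𝓝[>] (0:ℝ)) (𝓝 (p / p * (A / B) ^ (1/θ) * Fbar 0 ^ d)) :=
        hcont.tendsto.mono_left nhdsWithin_le_nhds
      have hle : (1:ℝ) ≤ p / p * (A / B) ^ (1/θ) * Fbar 0 ^ d :=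
        ge_of_tendsto ht (eventually_nhdsWithin_of_forall (fun x hx => key x hx))
      rw [hF0, Real.one_rpow, mul_one, div_self (ne_of_gt hp0), one_mul] at hle
      exact absurd hle (not_le.mpr hc)
    · exact heq
    · -- B < A : function strictly decreasing on (0,∞), contradiction
      exfalso
      have hd : 0 < A ^ (1/θ) - B ^ (1/θ) :=
        sub_pos.mpr (Real.rpow_lt_rpow hB.le hgt hinv)
      have h12 : Fbar 2 < Fbar 1 :=
        hFanti (by norm_num : (1:ℝ) ∈ Set.Ici 0) (by norm_num : (2:ℝ) ∈ Set.Ici 0)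
          one_lt_two
      have hpow : Fbar 2 ^ (A ^ (1/θ) - B ^ (1/θ)) <
          Fbar 1 ^ (A ^ (1/θ) - B ^ (1/θ)) :=
        Real.rpow_lt_rpow (hFpos 2).le h12 hd
      have hcpos : 0 < p / p * (A / B) ^ (1/θ) := by positivity
      have h := hmono (Set.mem_Ici.mpr (by norm_num : (0:ℝ) ≤ 1))
        (Set.mem_Ici.mpr (by norm_num : (0:ℝ) ≤ 2)) (by norm_num : (1:ℝ) ≤ 2)
      simp only [if_neg (one_ne_zero : (1:ℝ) ≠ 0), if_neg (two_ne_zero : (2:ℝ) ≠ 0)] at h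
      have := mul_lt_mul_of_pos_left hpow hcpos
      exact absurd h (not_le.mpr this)
  · intro hAB
    have hval : ∀ x : ℝ,
        (if x = 0 then (1 - p) / (1 - p)
         else p / p * (A / B) ^ (1/θ) * Fbar x ^ (A ^ (1/θ) - B ^ (1/θ))) = 1 := by
      intro x
      split_ifs with hx
      · exact div_self h1p
      · rw [hAB, div_self (ne_of_gt hB), Real.one_rpow, sub_self, Real.rpow_zero,
          div_self (ne_of_gt hp0), mul_one, mul_one]
    intro a _ b _ _
    simp only [hval]
    exact le_refl 1
end

section
/- For the Harris family survival function F̄(x;λ,θ) = (λ F̄(x)^θ / (1 − (1−λ) F̄(x)^θ))^{1/θ} with baseline survival function F̄(x) ∈ [0,1], θ ≥ 1, and λ > 0, F̄(x;λ,θ) is increasing and concave in λ for each fixed x. -/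
/-- For the Harris family survival function
`F̄(x;λ,θ) = (λ F̄(x)^θ / (1 - (1-λ) F̄(x)^θ))^{1/θ}` with baseline survival value
`s = F̄(x) ∈ [0,1]` and `θ ≥ 1`, the map `λ ↦ F̄(x;λ,θ)` is increasing and concave
on `λ > 0`. -/
theorem harris_survival_increasing_concave (s θ : ℝ)
    (hs : s ∈ Set.Icc (0:ℝ) 1) (hθ : 1 ≤ θ) :
    MonotoneOn (fun l : ℝ => (l * s ^ θ / (1 - (1 - l) * s ^ θ)) ^ (1 / θ))
        (Set.Ioi 0) ∧
      ConcaveOn ℝ (Set.Ioi 0)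
        (fun l : ℝ => (l * s ^ θ / (1 - (1 - l) * s ^ θ)) ^ (1 / θ)) := by
  have hθ0 : (0:ℝ) < θ := lt_of_lt_of_le one_pos hθ
  set t : ℝ := s ^ θ with htdef
  have ht0 : 0 ≤ t := Real.rpow_nonneg hs.1 θ
  have ht1 : t ≤ 1 := Real.rpow_le_one hs.1 hs.2 hθ0.le
  -- denominator positivity
  have hD : ∀ l : ℝ, 0 < l → 0 < 1 - (1 - l) * t := by
    intro l hl
    rcases lt_or_eq_of_le ht1 with h | h
    · nlinarith [mul_nonneg hl.le ht0]
    · rw [h]; ring_nf; nlinarith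
  have hg0 : ∀ l : ℝ, 0 < l → 0 ≤ l * t / (1 - (1 - l) * t) := by
    intro l hl
    exact div_nonneg (mul_nonneg hl.le ht0) (hD l hl).le
  -- monotonicity of the inner function
  have hmono : ∀ a b : ℝ, 0 < a → 0 < b → a ≤ b →
      a * t / (1 - (1 - a) * t) ≤ b * t / (1 - (1 - b) * t) := by
    intro a b ha hb hab
    rw [div_le_div_iff₀ (hD a ha) (hD b hb)]
    nlinarith [mul_nonneg (mul_nonneg ht0 (sub_nonneg.2 ht1)) (sub_nonneg.2 hab)]
  -- concavity of the inner function
  have hconc : ∀ x y a b : ℝ, 0 < x → 0 < y → 0 ≤ a → 0 ≤ b → a + b = 1 →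
      a * (x * t / (1 - (1 - x) * t)) + b * (y * t / (1 - (1 - y) * t)) ≤
        (a * x + b * y) * t / (1 - (1 - (a * x + b * y)) * t) := by
    intro x y a b hx hy ha hb hab
    have hDx := hD x hx
    have hDy := hD y hy
    have hpos : 0 < a * x + b * y := by
      by_cases hA : a = 0
      · have hb1 : b = 1 := by rw [hA] at hab; linarith
        rw [hA, hb1]; linarith
      · nlinarith [mul_pos (ha.lt_of_ne (Ne.symm hA)) hx, mul_nonneg hb hy.le]
    have hDxy := hD (a * x + b * y) hpos
    rw [← mul_div_assoc, ← mul_div_assoc,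
      div_add_div _ _ (ne_of_gt hDx) (ne_of_gt hDy), div_le_div_iff₀ (by positivity) hDxy]
    have hb' : b = 1 - a := by linarith
    have key : (a * x + b * y) * t * ((1 - (1 - x) * t) * (1 - (1 - y) * t)) -
        (a * (x * t) * (1 - (1 - y) * t) + (1 - (1 - x) * t) * (b * (y * t))) *
          (1 - (1 - (a * x + b * y)) * t) = a * b * t ^ 2 * (1 - t) * (x - y) ^ 2 := by
      rw [hb']; ring
    nlinarith [key, mul_nonneg (mul_nonneg (mul_nonneg (mul_nonneg ha hb) (sq_nonneg t))
      (sub_nonneg.2 ht1)) (sq_nonneg (x - y))]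
  have hp0 : (0:ℝ) ≤ 1 / θ := by positivity
  have hp1 : (1:ℝ) / θ ≤ 1 := by
    rw [div_le_one hθ0]; exact hθ
  constructor
  · intro a ha b hb hab
    exact Real.rpow_le_rpow (hg0 a ha) (hmono a b ha hb hab) hp0
  · refine ⟨convex_Ioi 0, ?_⟩
    intro x hx y hy a b ha hb hab
    simp only [smul_eq_mul]
    have hx' : (0:ℝ) < x := hx
    have hy' : (0:ℝ) < y := hy
    have h1 := hconc x y a b hx' hy' ha hb hab
    have h2 : a * (x * t / (1 - (1 - x) * t)) ^ (1 / θ) +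
        b * (y * t / (1 - (1 - y) * t)) ^ (1 / θ) ≤
        (a * (x * t / (1 - (1 - x) * t)) + b * (y * t / (1 - (1 - y) * t))) ^ (1 / θ) := by
      have := (Real.concaveOn_rpow hp0 hp1).2 (Set.mem_Ici.2 (hg0 x hx'))
        (Set.mem_Ici.2 (hg0 y hy')) ha hb hab
      simpa using this
    have h3 : (a * (x * t / (1 - (1 - x) * t)) + b * (y * t / (1 - (1 - y) * t))) ^ (1 / θ) ≤
        ((a * x + b * y) * t / (1 - (1 - (a * x + b * y)) * t)) ^ (1 / θ) :=
      Real.rpow_le_rpow (add_nonneg (mul_nonneg ha (hg0 x hx')) (mul_nonneg hb (hg0 y hy'))) h1 hp0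
    exact le_trans h2 h3
end

section
/- For the Lomax-exponential survival function F̄(x;α,β,λ) = (λ/(e^{βx} + λ − 1))^α with α ∈ (0,1], β > 0, λ > 0, x ≥ 0, the map λ ↦ F̄(x;α,β,λ) is increasing and concave for each fixed x ≥ 0. -/
/-- For the Lomax-exponential survival function
`F̄(x;α,β,λ) = (λ/(e^{βx} + λ - 1))^α` with `α ∈ (0,1]`, `β > 0`, `x ≥ 0`, the map
`λ ↦ F̄(x;α,β,λ)` is increasing and concave on `λ > 0`. -/
theorem lomax_exponential_increasing_concave (α β x : ℝ)
    (hα0 : 0 < α) (hα1 : α ≤ 1) (hβ : 0 < β) (hx : 0 ≤ x) :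
    MonotoneOn (fun l : ℝ => (l / (Real.exp (β * x) + l - 1)) ^ α) (Set.Ioi 0) ∧
      ConcaveOn ℝ (Set.Ioi 0)
        (fun l : ℝ => (l / (Real.exp (β * x) + l - 1)) ^ α) := by
  set c := Real.exp (β * x) with hcdef
  have hc1 : 1 ≤ c := Real.one_le_exp (by positivity)
  constructor
  · intro p hp q hq hpq
    have hp' : 0 < p := hp
    have hq' : 0 < q := hq
    have hP : 0 < c + p - 1 := by linarith
    have hQ : 0 < c + q - 1 := by linarith
    have h1 : p / (c + p - 1) ≤ q / (c + q - 1) := by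
      rw [div_le_div_iff₀ hP hQ]; nlinarith
    exact Real.rpow_le_rpow (by positivity) h1 hα0.le
  · refine ⟨convex_Ioi 0, fun p hp q hq t s ht hs hts => ?_⟩
    have hp' : 0 < p := hp
    have hq' : 0 < q := hq
    have hP : 0 < c + p - 1 := by linarith
    have hQ : 0 < c + q - 1 := by linarith
    have hpq : 0 < t * p + s * q := by
      rcases ht.eq_or_lt with h | h
      · have : s = 1 := by linarith
        nlinarith
      · nlinarith [mul_nonneg hs hq'.le]
    have hR : 0 < c + (t * p + s * q) - 1 := by linarith
    have hgp : (0:ℝ) ≤ p / (c + p - 1) := by positivity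
    have hgq : (0:ℝ) ≤ q / (c + q - 1) := by positivity
    have hgap : (t * p + s * q) / (c + (t * p + s * q) - 1)
        - (t * (p / (c + p - 1)) + s * (q / (c + q - 1)))
        = t * s * (c - 1) * (p - q) ^ 2
          / ((c + p - 1) * (c + q - 1) * (c + (t * p + s * q) - 1)) := by
      have hts' : s = 1 - t := by linarith
      subst hts'
      field_simp
      ring
    have hgapnn : (0:ℝ) ≤ t * s * (c - 1) * (p - q) ^ 2
          / ((c + p - 1) * (c + q - 1) * (c + (t * p + s * q) - 1)) := by
      have hc0 : (0:ℝ) ≤ c - 1 := by linarith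
      exact div_nonneg (mul_nonneg (mul_nonneg (mul_nonneg ht hs) hc0) (sq_nonneg _))
        (by positivity)
    have hcomb : t * (p / (c + p - 1)) + s * (q / (c + q - 1))
        ≤ (t * p + s * q) / (c + (t * p + s * q) - 1) := by linarith
    have h1 : t * (p / (c + p - 1)) ^ α + s * (q / (c + q - 1)) ^ α
        ≤ (t * (p / (c + p - 1)) + s * (q / (c + q - 1))) ^ α := by
      have := (Real.concaveOn_rpow hα0.le hα1).2 (Set.mem_Ici.mpr hgp)
        (Set.mem_Ici.mpr hgq) ht hs hts
      simpa using this
    have h2 : (t * (p / (c + p - 1)) + s * (q / (c + q - 1))) ^ α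
        ≤ ((t * p + s * q) / (c + (t * p + s * q) - 1)) ^ α :=
      Real.rpow_le_rpow (by positivity) hcomb hα0.le
    simp only [smul_eq_mul]
    calc t * (p / (c + p - 1)) ^ α + s * (q / (c + q - 1)) ^ α
        ≤ (t * (p / (c + p - 1)) + s * (q / (c + q - 1))) ^ α := h1
      _ ≤ ((t * p + s * q) / (c + (t * p + s * q) - 1)) ^ α := h2
end

section
/- If C_R is PUOD and λ_{1:n} = min(λ₁,…,λₙ), then for the Harris family margins F̄(x;λᵢ,θ) with θ ≥ 1, (∏ᵢ pᵢ)(λ_{1:n} F̄(x)^θ/(1−(1−λ_{1:n})F̄(x)^θ))^{n/θ} ≤ (∏ᵢ pᵢ) C_R(F̄(x;λ₁,θ),…,F̄(x;λₙ,θ)) ≤ (∏ᵢ pᵢ)(λ_{1:n} F̄(x)^θ/(1−(1−λ_{1:n})F̄(x)^θ))^{1/θ} for all x ≥ 0. -/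
open Finset

/-- Bounds for the survival function of the smallest claim amount with Harris family
margins `F̄(x;λᵢ,θ) = (λᵢ F̄(x)^θ/(1-(1-λᵢ)F̄(x)^θ))^{1/θ}`, `θ ≥ 1`, when the survival
copula `C` is PUOD (and satisfies the Fréchet–Hoeffding upper bound):
`(∏ pᵢ)(λ_{1:n} F̄(x)^θ/(1-(1-λ_{1:n})F̄(x)^θ))^{n/θ} ≤ (∏ pᵢ) C(…) ≤
 (∏ pᵢ)(λ_{1:n} F̄(x)^θ/(1-(1-λ_{1:n})F̄(x)^θ))^{1/θ}` for all `x ≥ 0`. -/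
theorem smallest_claim_harris_bounds {n : ℕ} (hn : 0 < n) (θ : ℝ) (hθ : 1 ≤ θ)
    (C : (Fin n → ℝ) → ℝ) (Fb : ℝ → ℝ) (p lam : Fin n → ℝ)
    (hFb : ∀ x, Fb x ∈ Set.Icc (0:ℝ) 1)
    (hlam : ∀ i, 0 < lam i)
    (hp : ∀ i, p i ∈ Set.Icc (0:ℝ) 1)
    (hPUOD : ∀ u : Fin n → ℝ, (∀ i, u i ∈ Set.Icc (0:ℝ) 1) → ∏ i, u i ≤ C u)
    (hUpper : ∀ u : Fin n → ℝ, (∀ i, u i ∈ Set.Icc (0:ℝ) 1) → ∀ i, C u ≤ u i) :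
    ∀ x : ℝ, 0 ≤ x →
      (∏ i, p i) * ((⨅ i, lam i) * Fb x ^ θ /
          (1 - (1 - ⨅ i, lam i) * Fb x ^ θ)) ^ ((n : ℝ) / θ) ≤
          (∏ i, p i) * C (fun i =>
            (lam i * Fb x ^ θ / (1 - (1 - lam i) * Fb x ^ θ)) ^ (1 / θ)) ∧
        (∏ i, p i) * C (fun i =>
            (lam i * Fb x ^ θ / (1 - (1 - lam i) * Fb x ^ θ)) ^ (1 / θ)) ≤
          (∏ i, p i) * ((⨅ i, lam i) * Fb x ^ θ /
            (1 - (1 - ⨅ i, lam i) * Fb x ^ θ)) ^ (1 / θ) := by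
  intro x hx
  haveI : Nonempty (Fin n) := ⟨⟨0, hn⟩⟩
  obtain ⟨hF0, hF1⟩ := hFb x
  set t := Fb x ^ θ with ht
  have hθ0 : 0 < θ := by linarith
  have ht0 : 0 ≤ t := Real.rpow_nonneg hF0 θ
  have ht1 : t ≤ 1 := Real.rpow_le_one hF0 hF1 (le_of_lt hθ0)
  obtain ⟨i₀, hi₀⟩ := Finite.exists_min lam
  have hbdd : BddBelow (Set.range lam) := (Set.finite_range lam).bddBelow
  have hinf : (⨅ i, lam i) = lam i₀ :=
    le_antisymm (ciInf_le hbdd i₀) (le_ciInf hi₀)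
  have denom_pos : ∀ a : ℝ, 0 < a → 0 < 1 - (1 - a) * t := by
    intro a ha
    have h : 1 - (1 - a) * t = (1 - t) + a * t := by ring
    rw [h]
    rcases lt_or_eq_of_le ht1 with h1 | h1
    · nlinarith
    · nlinarith
  have g_mem : ∀ a : ℝ, 0 < a → a * t / (1 - (1 - a) * t) ∈ Set.Icc (0:ℝ) 1 := by
    intro a ha
    have hd := denom_pos a ha
    refine ⟨div_nonneg (by positivity) hd.le, ?_⟩
    rw [div_le_one hd]; nlinarith
  have g_mono : ∀ a b : ℝ, 0 < a → a ≤ b →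
      a * t / (1 - (1 - a) * t) ≤ b * t / (1 - (1 - b) * t) := by
    intro a b ha hab
    have hda := denom_pos a ha
    have hdb := denom_pos b (lt_of_lt_of_le ha hab)
    rw [div_le_div_iff₀ hda hdb]
    nlinarith [mul_nonneg (mul_nonneg (sub_nonneg.mpr hab) ht0) (sub_nonneg.mpr ht1)]
  set u : Fin n → ℝ := fun i => (lam i * t / (1 - (1 - lam i) * t)) ^ (1 / θ) with hu
  have hu_mem : ∀ i, u i ∈ Set.Icc (0:ℝ) 1 := by
    intro i
    obtain ⟨h0, h1⟩ := g_mem (lam i) (hlam i)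
    exact ⟨Real.rpow_nonneg h0 _, Real.rpow_le_one h0 h1 (by positivity)⟩
  set G : ℝ := lam i₀ * t / (1 - (1 - lam i₀) * t) with hG
  obtain ⟨hG0, hG1⟩ := g_mem (lam i₀) (hlam i₀)
  have hGle : ∀ i, G ^ (1/θ) ≤ u i := by
    intro i
    exact Real.rpow_le_rpow hG0 (g_mono (lam i₀) (lam i) (hlam i₀) (hi₀ i)) (by positivity)
  have hp0 : (0:ℝ) ≤ ∏ i, p i := Finset.prod_nonneg fun i _ => (hp i).1
  rw [hinf]
  constructor
  · have key : G ^ ((n:ℝ)/θ) ≤ C u := by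
      have h1 : G ^ ((n:ℝ)/θ) = ∏ _i : Fin n, G ^ (1/θ) := by
        rw [Finset.prod_const, Finset.card_univ, Fintype.card_fin,
          ← Real.rpow_natCast (G ^ (1/θ)) n, ← Real.rpow_mul hG0]
        congr 1; ring
      rw [h1]
      calc ∏ _i : Fin n, G ^ (1/θ) ≤ ∏ i, u i := by
            apply Finset.prod_le_prod (fun i _ => Real.rpow_nonneg hG0 _)
              (fun i _ => hGle i)
        _ ≤ C u := hPUOD u hu_mem
    exact mul_le_mul_of_nonneg_left key hp0
  · have key : C u ≤ G ^ (1/θ) := hUpper u hu_mem i₀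
    exact mul_le_mul_of_nonneg_left key hp0
end
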